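/- Let K be the middle-third Cantor set, R = K ∩ [2/3, 1], and P(x,y) = xy. Then the union P(K × K) = {0} ∪ ⋃_{k≥0} 3^{-k}·P(R × R) is a disjoint union, and consequently the Lebesgue measure satisfies L(P(K × K)) = (3/2)·L(P(R × R)). -/

import Mathlib

open Set MeasureTheory

noncomputable def cantorK : Set ℝ :=
  {x | ∃ α : ℕ → ℝ, (∀ k, α k = 0 ∨ α k = 2) ∧ x = ∑' k : ℕ, α k / 3 ^ (k + 1)}

def Pset (E F : Set ℝ) : Set ℝ := Set.image2 (· * ·) E F

lemma digit_nonneg {α : ℕ → ℝ} (h : ∀ k, α k = 0 ∨ α k = 2) (k : ℕ) : 0 ≤ α k := by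
  rcases h k with h' | h' <;> rw [h'] <;> norm_num

lemma digit_le {α : ℕ → ℝ} (h : ∀ k, α k = 0 ∨ α k = 2) (k : ℕ) : α k ≤ 2 := by
  rcases h k with h' | h' <;> rw [h'] <;> norm_num

lemma summable_geom23 : Summable (fun k : ℕ => (2:ℝ) / 3 ^ (k+1)) := by
  have : (fun k : ℕ => (2:ℝ) / 3 ^ (k+1)) = fun k => (2/3) * (1/3)^k := by
    funext k; rw [pow_succ, one_div, inv_pow]; ring
  rw [this]
  exact (summable_geometric_of_lt_one (by norm_num) (by norm_num)).mul_left _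

lemma tsum_geom23 : ∑' k : ℕ, (2:ℝ) / 3 ^ (k+1) = 1 := by
  have : (fun k : ℕ => (2:ℝ) / 3 ^ (k+1)) = fun k => (2/3) * (1/3)^k := by
    funext k; rw [pow_succ, one_div, inv_pow]; ring
  rw [this, tsum_mul_left, tsum_geometric_of_lt_one (by norm_num) (by norm_num)]
  norm_num

lemma summable_digits {α : ℕ → ℝ} (h : ∀ k, α k = 0 ∨ α k = 2) :
    Summable (fun k => α k / 3 ^ (k+1)) := by
  refine Summable.of_nonneg_of_le (fun k => by have := digit_nonneg h k; positivity)
    (fun k => ?_) summable_geom23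
  have h3 : (0:ℝ) < 3 ^ (k+1) := by positivity
  exact div_le_div_of_nonneg_right (digit_le h k) h3.le |>.trans_eq rfl

lemma tsum_digits_nonneg {α : ℕ → ℝ} (h : ∀ k, α k = 0 ∨ α k = 2) :
    0 ≤ ∑' k : ℕ, α k / 3 ^ (k+1) :=
  tsum_nonneg (fun k => by have := digit_nonneg h k; positivity)

lemma tsum_digits_le_one {α : ℕ → ℝ} (h : ∀ k, α k = 0 ∨ α k = 2) :
    ∑' k : ℕ, α k / 3 ^ (k+1) ≤ 1 := by
  rw [← tsum_geom23]
  refine Summable.tsum_le_tsum (fun k => ?_) (summable_digits h) summable_geom23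
  have h3 : (0:ℝ) < 3 ^ (k+1) := by positivity
  exact div_le_div_of_nonneg_right (digit_le h k) h3.le |>.trans_eq rfl

lemma zero_mem_cantorK : (0:ℝ) ∈ cantorK :=
  ⟨fun _ => 0, fun _ => Or.inl rfl, by simp⟩

lemma cantorK_subset_Icc : cantorK ⊆ Icc (0:ℝ) 1 := by
  rintro x ⟨α, hα, rfl⟩
  exact ⟨tsum_digits_nonneg hα, tsum_digits_le_one hα⟩

/-- shift: x ∈ K → x/3 ∈ K -/
lemma div_three_mem_cantorK {x : ℝ} (hx : x ∈ cantorK) : x / 3 ∈ cantorK := by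
  obtain ⟨α, hα, rfl⟩ := hx
  set γ : ℕ → ℝ := fun k => match k with | 0 => 0 | (j+1) => α j with hγ
  have hγd : ∀ k, γ k = 0 ∨ γ k = 2 := fun k => by
    cases k with
    | zero => exact Or.inl rfl
    | succ j => exact hα j
  refine ⟨γ, hγd, ?_⟩
  have hs : Summable (fun k => γ k / 3 ^ (k+1)) := summable_digits hγd
  rw [← Summable.sum_add_tsum_nat_add 1 hs]
  simp only [Finset.range_one, Finset.sum_singleton]
  have : ∀ j : ℕ, γ (j + 1) / 3 ^ (j + 1 + 1) = (α j / 3 ^ (j+1)) / 3 := by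
    intro j
    show α j / 3 ^ (j + 2) = _
    rw [pow_succ]
    ring
  rw [tsum_congr this, tsum_div_const]
  norm_num

lemma div_pow_mem_cantorK {x : ℝ} (hx : x ∈ cantorK) (m : ℕ) : x / 3 ^ m ∈ cantorK := by
  induction m with
  | zero => simpa using hx
  | succ n ih =>
    have := div_three_mem_cantorK ih
    rwa [div_div, ← pow_succ] at this

/-- decomposition of nonzero members of K -/
lemma cantorK_decomp {x : ℝ} (hx : x ∈ cantorK) :
    x = 0 ∨ ∃ m : ℕ, ∃ r ∈ cantorK ∩ Icc (2/3 : ℝ) 1, x = r / 3 ^ m := by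
  obtain ⟨α, hα, rfl⟩ := hx
  by_cases hz : ∀ k, α k = 0
  · left
    have : (fun k => α k / 3 ^ (k+1)) = fun _ => (0:ℝ) := by
      funext k; rw [hz k]; simp
    rw [this]; simp
  · right
    push_neg at hz
    have hex : ∃ m, α m ≠ 0 := hz
    classical
    set m := Nat.find hex with hm
    have hαm : α m = 2 := (hα m).resolve_left (Nat.find_spec hex)
    have hlt : ∀ j < m, α j = 0 := fun j hj => by
      by_contra hc; exact absurd (Nat.find_le hc) (not_le.mpr hj)
    set β : ℕ → ℝ := fun j => α (m + j) with hβ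
    have hβd : ∀ j, β j = 0 ∨ β j = 2 := fun j => hα (m + j)
    refine ⟨m, ∑' j : ℕ, β j / 3 ^ (j+1), ⟨⟨β, hβd, rfl⟩, ?_, tsum_digits_le_one hβd⟩, ?_⟩
    · -- 2/3 ≤ r
      have hs := summable_digits hβd
      have := Summable.sum_add_tsum_nat_add 1 hs
      rw [← this]
      simp only [Finset.range_one, Finset.sum_singleton]
      have h0 : β 0 / 3 ^ (0+1) = 2/3 := by
        rw [hβ]; simp only [Nat.add_zero]; rw [hαm]; norm_num
      rw [h0]
      have : 0 ≤ ∑' j : ℕ, β (j + 1) / 3 ^ (j + 1 + 1) :=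
        tsum_nonneg (fun j => by have := digit_nonneg hβd (j+1); positivity)
      linarith
    · -- x = r / 3^m
      have hs := summable_digits hα
      rw [← Summable.sum_add_tsum_nat_add m hs]
      have hzero : ∑ i ∈ Finset.range m, α i / 3 ^ (i+1) = 0 :=
        Finset.sum_eq_zero (fun i hi => by
          rw [hlt i (Finset.mem_range.mp hi)]; simp)
      rw [hzero, zero_add]
      rw [← tsum_div_const]
      refine tsum_congr (fun j => ?_)
      rw [hβ]
      simp only [add_comm j m]
      rw [div_div, ← pow_add]
      ring_nf

/-! ### Compactness -/

noncomputable def hmap : (ℕ → Bool) → ℝ :=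
  fun b => ∑' k : ℕ, (if b k then (2:ℝ) else 0) / 3 ^ (k + 1)

lemma continuous_hmap : Continuous hmap := by
  refine continuous_tsum (u := fun k : ℕ => (2:ℝ) / 3 ^ (k+1)) (fun k => ?_) summable_geom23
    (fun k b => ?_)
  · exact Continuous.comp (continuous_of_discreteTopology
      (f := fun x : Bool => (if x then (2:ℝ) else 0) / 3 ^ (k+1))) (continuous_apply k)
  · rw [Real.norm_eq_abs, abs_div, abs_of_nonneg (by positivity : (0:ℝ) ≤ 3 ^ (k+1))]
    have hb : |if b k then (2:ℝ) else 0| ≤ 2 := by by_cases h : b k <;> simp [h]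
    exact div_le_div_of_nonneg_right hb (by positivity)

lemma cantorK_eq_range : cantorK = Set.range hmap := by
  ext x
  constructor
  · rintro ⟨α, hα, rfl⟩
    refine ⟨fun k => α k = 2, ?_⟩
    unfold hmap
    refine tsum_congr (fun k => ?_)
    rcases hα k with h | h <;> simp [h]
  · rintro ⟨b, rfl⟩
    exact ⟨fun k => if b k then 2 else 0, fun k => by by_cases h : b k <;> simp [h], rfl⟩

lemma isCompact_cantorK : IsCompact cantorK := by
  rw [cantorK_eq_range, ← Set.image_univ]
  exact (isCompact_univ).image continuous_hmap

lemma isCompact_PsetRR {R : Set ℝ} (hR : R = cantorK ∩ Icc (2/3) 1) :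
    IsCompact (Pset R R) := by
  have hRc : IsCompact R := hR ▸ isCompact_cantorK.inter_right isClosed_Icc
  rw [Pset, ← Set.image_prod]
  exact (hRc.prod hRc).image (continuous_fst.mul continuous_snd)

lemma PsetRR_subset {R : Set ℝ} (hR : R = cantorK ∩ Icc (2/3) 1) :
    Pset R R ⊆ Icc (4/9 : ℝ) 1 := by
  rintro z ⟨x, hx, y, hy, rfl⟩
  rw [hR] at hx hy
  obtain ⟨-, hx1, hx2⟩ := hx
  obtain ⟨-, hy1, hy2⟩ := hy
  constructor
  · calc (4/9 : ℝ) = (2/3) * (2/3) := by norm_num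
      _ ≤ x * y := by
        apply mul_le_mul hx1 hy1 (by norm_num) (by linarith)
  · show x * y ≤ 1
    nlinarith

theorem stmt1 (R : Set ℝ) (hR : R = cantorK ∩ Icc (2/3) 1)
    (S : ℕ → Set ℝ) (hS : ∀ k, S k = (fun x : ℝ => x / 3 ^ k) '' Pset R R) :
    (Pset cantorK cantorK = {0} ∪ ⋃ k : ℕ, S k) ∧
    Pairwise (Function.onFun Disjoint S) ∧ (∀ k, (0:ℝ) ∉ S k) ∧
    volume (Pset cantorK cantorK) = (3/2) * volume (Pset R R) := by
  have hSbound : ∀ k, ∀ z ∈ S k, (4/9 : ℝ) / 3 ^ k ≤ z ∧ z ≤ 1 / 3 ^ k := by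
    intro k z hz
    rw [hS k] at hz
    obtain ⟨p, hp, rfl⟩ := hz
    obtain ⟨h1, h2⟩ := PsetRR_subset hR hp
    have h3 : (0:ℝ) < 3 ^ k := by positivity
    exact ⟨div_le_div_of_nonneg_right h1 h3.le, div_le_div_of_nonneg_right h2 h3.le⟩
  -- set equality
  have hEq : Pset cantorK cantorK = {0} ∪ ⋃ k : ℕ, S k := by
    ext z
    constructor
    · rintro ⟨x, hx, y, hy, rfl⟩
      rcases cantorK_decomp hx with rfl | ⟨m, r, hr, rfl⟩
      · exact Or.inl (by simp)
      rcases cantorK_decomp hy with rfl | ⟨n, s, hs, rfl⟩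
      · exact Or.inl (by simp)
      refine Or.inr (Set.mem_iUnion.mpr ⟨m + n, ?_⟩)
      rw [hS (m+n)]
      refine ⟨r * s, Set.mem_image2_of_mem (hR ▸ hr) (hR ▸ hs), ?_⟩
      rw [pow_add]
      field_simp
    · rintro (rfl | hz)
      · exact ⟨0, zero_mem_cantorK, 0, zero_mem_cantorK, by norm_num⟩
      obtain ⟨k, hk⟩ := Set.mem_iUnion.mp hz
      rw [hS k] at hk
      obtain ⟨p, hp, rfl⟩ := hk
      obtain ⟨r, hr, s, hs, rfl⟩ := hp
      rw [hR] at hr hs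
      refine ⟨r / 3 ^ k, div_pow_mem_cantorK hr.1 k, s, hs.1, ?_⟩
      show r / 3 ^ k * s = r * s / 3 ^ k
      rw [div_mul_eq_mul_div]
  -- disjointness helper
  have hdisj : ∀ k l : ℕ, k < l → Disjoint (S k) (S l) := by
    intro k l hkl
    rw [Set.disjoint_left]
    intro a hak hal
    obtain ⟨hk1, -⟩ := hSbound k a hak
    obtain ⟨-, hl2⟩ := hSbound l a hal
    have h1 : (3:ℝ) ^ (k+1) ≤ 3 ^ l := pow_le_pow_right₀ (by norm_num) hkl
    have h2 : (0:ℝ) < 3 ^ l := by positivity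
    have h3 : (0:ℝ) < 3 ^ k := by positivity
    have h4 : a ≤ 1 / 3 ^ (k+1) := hl2.trans (by
      apply div_le_div_of_nonneg_left (by norm_num) (by positivity) h1)
    rw [pow_succ] at h4
    have : (4/9 : ℝ) / 3 ^ k ≤ 1 / (3 ^ k * 3) := hk1.trans h4
    rw [div_le_div_iff₀ (by positivity) (by positivity)] at this
    nlinarith
  have hPairwise : Pairwise (Function.onFun Disjoint S) := by
    intro k l hkl
    rcases hkl.lt_or_gt with h | h
    · exact hdisj k l h
    · exact (hdisj l k h).symm
  have hzero : ∀ k, (0:ℝ) ∉ S k := by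
    intro k hk
    have := (hSbound k 0 hk).1
    have : (0:ℝ) < 4/9/3^k := by positivity
    linarith [(hSbound k 0 hk).1]
  refine ⟨hEq, hPairwise, hzero, ?_⟩
  -- measure computation
  have hSmeas : ∀ k, MeasurableSet (S k) := by
    intro k
    rw [hS k]
    exact (((isCompact_PsetRR hR).image (continuous_id.div_const _)).isClosed).measurableSet
  have hSvol : ∀ k, volume (S k) = ENNReal.ofReal ((1/3 : ℝ) ^ k) * volume (Pset R R) := by
    intro k
    have hc : (3:ℝ) ^ k ≠ 0 := by positivity
    have himg : S k = ((3:ℝ)^k * ·) ⁻¹' Pset R R := by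
      rw [hS k]
      ext z
      simp only [Set.mem_image, Set.mem_preimage]
      constructor
      · rintro ⟨x, hx, rfl⟩
        rwa [mul_div_cancel₀ _ hc]
      · intro h
        exact ⟨3^k * z, h, by field_simp⟩
    rw [himg, Real.volume_preimage_mul_left hc]
    congr 1
    rw [abs_of_nonneg (by positivity : (0:ℝ) ≤ ((3:ℝ)^k)⁻¹)]
    congr 1
    rw [← inv_pow]
    norm_num
  have hu : volume ({(0:ℝ)} ∪ ⋃ k, S k) = volume (⋃ k, S k) := by
    apply le_antisymm
    · calc volume ({(0:ℝ)} ∪ ⋃ k, S k) ≤ volume {(0:ℝ)} + volume (⋃ k, S k) :=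
        measure_union_le _ _
        _ = volume (⋃ k, S k) := by simp
    · exact measure_mono subset_union_right
  rw [hEq, hu, measure_iUnion hPairwise hSmeas]
  have : ∀ k : ℕ, volume (S k) = (ENNReal.ofReal (1/3 : ℝ)) ^ k * volume (Pset R R) := by
    intro k
    rw [hSvol k, ENNReal.ofReal_pow (by norm_num)]
  rw [tsum_congr this, ENNReal.tsum_mul_right, ENNReal.tsum_geometric]
  congr 1
  have h13 : (1:ENNReal) - ENNReal.ofReal (1/3) = ENNReal.ofReal (2/3) := by
    rw [← ENNReal.ofReal_one, ← ENNReal.ofReal_sub _ (by norm_num)]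
    norm_num
  rw [h13, ← ENNReal.ofReal_inv_of_pos (by norm_num)]
  rw [show ((2:ℝ)/3)⁻¹ = 3/2 by norm_num]
  rw [ENNReal.ofReal_div_of_pos (by norm_num)]
  norm_num
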